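/- arXiv:0901.1196 — 5 statements merged into one kernel-verified Lean document; each statement's English description precedes it below -/
import Mathlib

section
/- Let F be a free A-graded module with homogeneous basis B, and G a graded submodule of F. Define the S-support S_B(h) of a homogeneous element h ∈ F as the set of pairs (monomial, basis element) occurring with nonzero coefficient in the expansion of h in the basis B, and order elements by inclusion of S-supports. Then G admits a minimal generating set consisting of elements each of which is simple in G with respect to B, i.e., minimal with respect to the S-support order among nonzero homogeneous elements of G. -/
/-- The `𝒜`-degree of the monomial `x^u`: the image of `u` in `ℤⁿ/L`. -/
def degQ (n : ℕ) (L : AddSubgroup (Fin n → ℤ)) (u : Fin n →₀ ℕ) : (Fin n → ℤ) ⧸ L :=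
  QuotientAddGroup.mk (fun i => (u i : ℤ))

/-- The `S`-support of an element `h` of the free module `F = ⊕_{t ∈ ι} R·E_t`
with respect to the standard basis: the pairs (monomial, basis element) occurring in `h`. -/
def SSupp (k : Type) [Field k] (n : ℕ) (ι : Type)
    (h : ι →₀ MvPolynomial (Fin n) k) : Set ((Fin n →₀ ℕ) × ι) :=
  {p | MvPolynomial.coeff p.1 (h p.2) ≠ 0}

/-- `h` is `𝒜`-homogeneous of degree `b` (the basis element `E_t` having degree `dB t`). -/
def IsHomogEl (k : Type) [Field k] (n : ℕ) (L : AddSubgroup (Fin n → ℤ)) (ι : Type)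
    (dB : ι → (Fin n → ℤ) ⧸ L) (h : ι →₀ MvPolynomial (Fin n) k)
    (b : (Fin n → ℤ) ⧸ L) : Prop :=
  ∀ (a : Fin n →₀ ℕ) (t : ι), MvPolynomial.coeff a (h t) ≠ 0 → degQ n L a + dB t = b

/-- `h` is simple in `G` with respect to the basis: there is no nonzero homogeneous
`h' ∈ G` whose `S`-support is strictly contained in that of `h`. -/
def IsSimpleEl (k : Type) [Field k] (n : ℕ) (L : AddSubgroup (Fin n → ℤ)) (ι : Type)
    (dB : ι → (Fin n → ℤ) ⧸ L)
    (G : Submodule (MvPolynomial (Fin n) k) (ι →₀ MvPolynomial (Fin n) k))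
    (h : ι →₀ MvPolynomial (Fin n) k) : Prop :=
  ¬ ∃ h' ∈ G, h' ≠ 0 ∧ (∃ b, IsHomogEl k n L ι dB h' b) ∧
      SSupp k n ι h' ⊂ SSupp k n ι h

section Aux
variable {k : Type} [Field k] {n : ℕ} {L : AddSubgroup (Fin n → ℤ)} {ι : Type}
  {dB : ι → (Fin n → ℤ) ⧸ L}
  {G : Submodule (MvPolynomial (Fin n) k) (ι →₀ MvPolynomial (Fin n) k)}

lemma ssupp_finite (h : ι →₀ MvPolynomial (Fin n) k) : (SSupp k n ι h).Finite := by
  apply Set.Finite.subset (Set.Finite.biUnion h.support.finite_toSet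
    (fun t _ => Set.Finite.image (fun a => (a, t)) (h t).support.finite_toSet))
  rintro ⟨a, t⟩ hp
  have h1 : MvPolynomial.coeff a (h t) ≠ 0 := hp
  have ht : t ∈ h.support := Finsupp.mem_support_iff.2 (fun h0 => h1 (by simp [h0]))
  have ha : a ∈ (h t).support := MvPolynomial.mem_support_iff.2 h1
  simp only [Set.mem_iUnion]
  exact ⟨t, ht, a, ha, rfl⟩

lemma ssupp_empty_iff (h : ι →₀ MvPolynomial (Fin n) k) :
    SSupp k n ι h = ∅ ↔ h = 0 := by
  constructor
  · intro he
    ext t a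
    simp only [Finsupp.coe_zero, Pi.zero_apply, MvPolynomial.coeff_zero]
    by_contra hc
    have : (a, t) ∈ SSupp k n ι h := by
      simpa [SSupp] using hc
    rw [he] at this
    exact this
  · intro h0
    subst h0
    ext p
    simp [SSupp]

lemma exists_simple_le :
    ∀ m : ℕ, ∀ h : ι →₀ MvPolynomial (Fin n) k, (SSupp k n ι h).ncard ≤ m →
      h ∈ G → h ≠ 0 → (∃ b, IsHomogEl k n L ι dB h b) →
      ∃ s, s ∈ G ∧ s ≠ 0 ∧ (∃ b, IsHomogEl k n L ι dB s b) ∧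
        IsSimpleEl k n L ι dB G s ∧ SSupp k n ι s ⊆ SSupp k n ι h := by
  intro m
  induction m with
  | zero =>
      intro h hc hmem h0 _
      exact absurd ((ssupp_empty_iff h).1
        ((Set.ncard_eq_zero (ssupp_finite h)).1 (Nat.le_zero.1 hc))) h0
  | succ m ih =>
      intro h hc hmem h0 hhom
      by_cases hs : IsSimpleEl k n L ι dB G h
      · exact ⟨h, hmem, h0, hhom, hs, subset_rfl⟩
      · rw [IsSimpleEl, not_not] at hs
        obtain ⟨h', hmem', h0', hhom', hsub⟩ := hs
        have hlt : (SSupp k n ι h').ncard < (SSupp k n ι h).ncard :=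
          Set.ncard_lt_ncard hsub (ssupp_finite h)
        obtain ⟨s, a1, a2, a3, a4, a5⟩ := ih h' (by omega) hmem' h0' hhom'
        exact ⟨s, a1, a2, a3, a4, a5.trans hsub.subset⟩

lemma mem_span_simple :
    ∀ m : ℕ, ∀ h : ι →₀ MvPolynomial (Fin n) k, (SSupp k n ι h).ncard ≤ m →
      h ∈ G → (∃ b, IsHomogEl k n L ι dB h b) →
      h ∈ Submodule.span (MvPolynomial (Fin n) k)
        {g | g ∈ G ∧ (∃ b, IsHomogEl k n L ι dB g b) ∧ IsSimpleEl k n L ι dB G g} := by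
  intro m
  induction m with
  | zero =>
      intro h hc _ _
      have : h = 0 := (ssupp_empty_iff h).1
        ((Set.ncard_eq_zero (ssupp_finite h)).1 (Nat.le_zero.1 hc))
      simp [this]
  | succ m ih =>
      intro h hc hmem hhom
      by_cases h0 : h = 0
      · simp [h0]
      · obtain ⟨s, smem, s0, shom, ssimple, ssub⟩ :=
          exists_simple_le (m + 1) h hc hmem h0 hhom
        have hne : (SSupp k n ι s).Nonempty := by
          rw [Set.nonempty_iff_ne_empty, Ne, ssupp_empty_iff]; exact s0
        obtain ⟨⟨a, t⟩, hat⟩ := hne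
        have hatS : MvPolynomial.coeff a (s t) ≠ 0 := hat
        have hath : MvPolynomial.coeff a (h t) ≠ 0 := ssub hat
        set c : k := MvPolynomial.coeff a (h t) / MvPolynomial.coeff a (s t) with hcdef
        set h₂ := h - (MvPolynomial.C c : MvPolynomial (Fin n) k) • s with hh2
        have hcoeff : ∀ (a' : Fin n →₀ ℕ) (t' : ι),
            MvPolynomial.coeff a' (h₂ t') =
              MvPolynomial.coeff a' (h t') - c * MvPolynomial.coeff a' (s t') := by
          intro a' t'
          simp [hh2, Finsupp.sub_apply, Finsupp.smul_apply, smul_eq_mul,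
            MvPolynomial.coeff_sub, MvPolynomial.coeff_C_mul]
        have hzero : MvPolynomial.coeff a (h₂ t) = 0 := by
          rw [hcoeff, hcdef, div_mul_cancel₀ _ hatS, sub_self]
        have hsub2 : SSupp k n ι h₂ ⊂ SSupp k n ι h := by
          constructor
          · rintro ⟨a', t'⟩ hp
            have hp' : MvPolynomial.coeff a' (h₂ t') ≠ 0 := hp
            by_contra hn
            have hzh : MvPolynomial.coeff a' (h t') = 0 := not_not.1 hn
            have hzs : MvPolynomial.coeff a' (s t') = 0 := by
              by_contra hns
              exact hn (ssub hns)
            exact hp' (by rw [hcoeff, hzh, hzs, mul_zero, sub_zero])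
          · intro hcon
            have hm := hcon (ssub hat)
            simp only [SSupp, Set.mem_setOf_eq] at hm
            exact hm hzero
        have hlt := Set.ncard_lt_ncard hsub2 (ssupp_finite h)
        obtain ⟨b, hb⟩ := hhom
        obtain ⟨b', hb'⟩ := shom
        have hbb : b' = b := by rw [← hb' a t hatS, hb a t hath]
        have hhom2 : IsHomogEl k n L ι dB h₂ b := by
          intro a' t' hne'
          rw [hcoeff] at hne'
          by_cases hzh : MvPolynomial.coeff a' (h t') = 0
          · have hzs : MvPolynomial.coeff a' (s t') ≠ 0 := by
              intro hz
              exact hne' (by rw [hzh, hz, mul_zero, sub_zero])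
            exact hbb ▸ hb' a' t' hzs
          · exact hb a' t' hzh
        have hmem2 : h₂ ∈ G := Submodule.sub_mem G hmem (Submodule.smul_mem G _ smem)
        have ih2 := ih h₂ (by omega) hmem2 ⟨b, hhom2⟩
        have heq : h = h₂ + (MvPolynomial.C c : MvPolynomial (Fin n) k) • s := by
          rw [hh2, sub_add_cancel]
        rw [heq]
        exact Submodule.add_mem _ ih2 (Submodule.smul_mem _ _
          (Submodule.subset_span ⟨smem, ⟨b', hb'⟩, ssimple⟩))

end Aux

/-- a graded submodule `G` of a free `𝒜`-graded module `F` admits a minimal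
generating set consisting of homogeneous elements, each simple in `G` with respect to the
given basis. -/
theorem exists_minimal_simple_generating_set (k : Type) [Field k] (n : ℕ)
    (L : AddSubgroup (Fin n → ℤ)) (hL : ∀ w ∈ L, (∀ i, 0 ≤ w i) → w = 0)
    (ι : Type) [Fintype ι] (dB : ι → (Fin n → ℤ) ⧸ L)
    (G : Submodule (MvPolynomial (Fin n) k) (ι →₀ MvPolynomial (Fin n) k))
    (hG : G = Submodule.span (MvPolynomial (Fin n) k)
      {h | h ∈ G ∧ ∃ b, IsHomogEl k n L ι dB h b}) :
    ∃ S : Set (ι →₀ MvPolynomial (Fin n) k),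
      (∀ h ∈ S, h ∈ G ∧ (∃ b, IsHomogEl k n L ι dB h b) ∧ IsSimpleEl k n L ι dB G h) ∧
      Submodule.span (MvPolynomial (Fin n) k) S = G ∧
      (∀ h ∈ S, h ∉ Submodule.span (MvPolynomial (Fin n) k) (S \ {h})) := by
  classical
  set R := MvPolynomial (Fin n) k with hR
  set Sig := {g : ι →₀ MvPolynomial (Fin n) k |
    g ∈ G ∧ (∃ b, IsHomogEl k n L ι dB g b) ∧ IsSimpleEl k n L ι dB G g} with hSig
  have hspan : Submodule.span R Sig = G := by
    apply le_antisymm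
    · rw [Submodule.span_le]; exact fun g hg => hg.1
    · conv_lhs => rw [hG]
      rw [Submodule.span_le]
      rintro g ⟨hgG, hgh⟩
      exact mem_span_simple (SSupp k n ι g).ncard g le_rfl hgG hgh
  obtain ⟨T0, hT0⟩ := IsNoetherian.noetherian G
  have hfin : ∀ g ∈ T0, ∃ T : Finset (ι →₀ MvPolynomial (Fin n) k),
      ↑T ⊆ Sig ∧ g ∈ Submodule.span R (↑T : Set _) := by
    intro g hg
    have : g ∈ Submodule.span R Sig := by
      rw [hspan, ← hT0]; exact Submodule.subset_span hg
    exact Submodule.mem_span_finite_of_mem_span this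
  choose f hf1 hf2 using hfin
  set T1 : Finset (ι →₀ MvPolynomial (Fin n) k) :=
    T0.attach.biUnion (fun g => f g.1 g.2) with hT1
  have hT1sub : (↑T1 : Set _) ⊆ Sig := by
    intro x hx
    rw [hT1] at hx
    simp only [Finset.coe_biUnion, Set.mem_iUnion, Finset.mem_coe] at hx
    obtain ⟨g, _, hgx⟩ := hx
    exact hf1 g.1 g.2 hgx
  have hT1span : Submodule.span R (↑T1 : Set _) = G := by
    apply le_antisymm
    · rw [Submodule.span_le]
      exact fun x hx => (hT1sub hx).1
    · rw [← hT0, Submodule.span_le]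
      intro g hg
      refine Submodule.span_mono ?_ (hf2 g hg)
      intro x hx
      rw [hT1]
      simp only [Finset.coe_biUnion, Set.mem_iUnion, Finset.mem_coe]
      exact ⟨⟨g, hg⟩, Finset.mem_attach _ _, hx⟩
  have hex : ∃ m : ℕ, ∃ T : Finset (ι →₀ MvPolynomial (Fin n) k),
      T.card = m ∧ (↑T : Set _) ⊆ Sig ∧ Submodule.span R (↑T : Set _) = G :=
    ⟨T1.card, T1, rfl, hT1sub, hT1span⟩
  obtain ⟨T, hcard, hTsub, hTspan⟩ := Nat.find_spec hex
  refine ⟨(↑T : Set _), fun h hh => hTsub hh, hTspan, ?_⟩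
  intro h hhS hcon
  have hhT : h ∈ T := hhS
  have hco : ((↑(T.erase h) : Set _)) = (↑T : Set _) \ {h} := by
    simp [Finset.coe_erase]
  have hespan : Submodule.span R (↑(T.erase h) : Set _) = G := by
    apply le_antisymm
    · rw [← hTspan]
      exact Submodule.span_mono (by rw [hco]; exact Set.diff_subset)
    · rw [← hTspan, Submodule.span_le]
      intro g hg
      by_cases hgh : g = h
      · subst hgh
        rw [hco]
        exact hcon
      · exact Submodule.subset_span (Finset.mem_coe.2 (Finset.mem_erase.2 ⟨hgh, Finset.mem_coe.1 hg⟩))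
  have hlt : (T.erase h).card < Nat.find hex := by
    rw [← hcard]
    exact Finset.card_erase_lt_of_mem hhT
  exact Nat.find_min hex hlt ⟨T.erase h, rfl, (hco ▸ (Set.diff_subset.trans hTsub) : _), hespan⟩
end

section
/- With notation as above, if h and h' are homogeneous elements of a graded submodule G ⊆ F, both simple in G with respect to the basis B, and S_B(h) = S_B(h'), then h' = c·h for some nonzero scalar c ∈ k. -/
/-- two simple homogeneous elements of a graded submodule `G` with the same
`S`-support are nonzero scalar multiples of each other. -/
theorem simple_same_support_scalar (k : Type) [Field k] (n : ℕ)
    (L : AddSubgroup (Fin n → ℤ)) (hL : ∀ w ∈ L, (∀ i, 0 ≤ w i) → w = 0)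
    (ι : Type) [Fintype ι] (dB : ι → (Fin n → ℤ) ⧸ L)
    (G : Submodule (MvPolynomial (Fin n) k) (ι →₀ MvPolynomial (Fin n) k))
    (h h' : ι →₀ MvPolynomial (Fin n) k)
    (hmem : h ∈ G) (hmem' : h' ∈ G)
    (hhom : ∃ b, IsHomogEl k n L ι dB h b) (hhom' : ∃ b, IsHomogEl k n L ι dB h' b)
    (hs : IsSimpleEl k n L ι dB G h) (hs' : IsSimpleEl k n L ι dB G h')
    (hsup : SSupp k n ι h = SSupp k n ι h') :
    ∃ c : k, c ≠ 0 ∧ h' = c • h := by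
  classical
  by_cases hzero : h = 0
  · refine ⟨1, one_ne_zero, ?_⟩
    have hempty : ∀ p : (Fin n →₀ ℕ) × ι, p ∉ SSupp k n ι h' := by
      intro p hp
      rw [← hsup] at hp
      simp [SSupp, hzero] at hp
    have h'0 : h' = 0 := by
      ext t a
      have := hempty (a, t)
      simp [SSupp] at this
      simp [this]
    rw [hzero, h'0]; simp
  · -- h ≠ 0: pick (a, t) in the support
    obtain ⟨t, ht⟩ := Finsupp.ne_iff.mp hzero
    simp only [Finsupp.coe_zero, Pi.zero_apply] at ht
    obtain ⟨a, ha⟩ := MvPolynomial.ne_zero_iff.mp ht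
    have hmemS : (a, t) ∈ SSupp k n ι h := ha
    have hmemS' : (a, t) ∈ SSupp k n ι h' := hsup ▸ hmemS
    have hβ : MvPolynomial.coeff a (h' t) ≠ 0 := hmemS'
    set α := MvPolynomial.coeff a (h t) with hα_def
    set β := MvPolynomial.coeff a (h' t) with hβ_def
    have hc : β / α ≠ 0 := div_ne_zero hβ ha
    set c : k := β / α with hc_def
    refine ⟨c, hc, ?_⟩
    set g : ι →₀ MvPolynomial (Fin n) k := h' - (MvPolynomial.C c : MvPolynomial (Fin n) k) • h with hg_def
    have hgmem : g ∈ G := G.sub_mem hmem' (G.smul_mem _ hmem)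
    have hgcoeff : ∀ (p : Fin n →₀ ℕ) (s : ι),
        MvPolynomial.coeff p (g s)
          = MvPolynomial.coeff p (h' s) - c * MvPolynomial.coeff p (h s) := by
      intro p s
      simp [hg_def, Finsupp.sub_apply, Finsupp.smul_apply, smul_eq_mul,
        MvPolynomial.coeff_sub, MvPolynomial.coeff_C_mul]
    obtain ⟨b, hb⟩ := hhom
    obtain ⟨b', hb'⟩ := hhom'
    have hbb' : b' = b := by
      have e1 := hb a t ha
      have e2 := hb' a t hβ
      rw [← e1, ← e2]
    -- support of g is contained in that of h
    have hsub : SSupp k n ι g ⊆ SSupp k n ι h := by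
      intro p hp
      by_contra hnp
      have hnp' : p ∉ SSupp k n ι h' := hsup ▸ hnp
      simp only [SSupp, Set.mem_setOf_eq, not_not] at hnp hnp'
      simp only [SSupp, Set.mem_setOf_eq] at hp
      rw [hgcoeff p.1 p.2, hnp, hnp'] at hp
      simp at hp
    -- (a, t) is not in the support of g
    have hat : (a, t) ∉ SSupp k n ι g := by
      simp only [SSupp, Set.mem_setOf_eq, not_not]
      rw [hgcoeff a t, ← hβ_def, ← hα_def, hc_def, div_mul_cancel₀ β ha, sub_self]
    -- g is homogeneous of degree b
    have hghom : IsHomogEl k n L ι dB g b := by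
      intro p s hps
      rw [hgcoeff p s] at hps
      by_cases hh : MvPolynomial.coeff p (h s) ≠ 0
      · exact hb p s hh
      · push_neg at hh
        rw [hh, mul_zero, sub_zero] at hps
        rw [hb' p s hps, hbb']
    -- g must be zero by simplicity of h
    have hg0 : g = 0 := by
      by_contra hgne
      exact hs ⟨g, hgmem, hgne, ⟨b, hghom⟩, hsub, fun habs => hat (habs hmemS)⟩
    have : h' = (MvPolynomial.C c : MvPolynomial (Fin n) k) • h := by
      have := sub_eq_zero.mp (hg_def ▸ hg0)
      exact this
    rw [this]
    ext s
    simp [Finsupp.smul_apply, smul_eq_mul, MvPolynomial.smul_eq_C_mul]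
end

section
/- Let F be a free 𝒜-graded module with finite homogeneous basis B and fix b ∈ 𝒜. Then the set C = {(x^a, E_t) : E_t ∈ B, deg_𝒜(x^a) + deg_𝒜(E_t) = b} is finite. Consequently, the set of scalar-equivalence classes of homogeneous elements of 𝒜-degree b in F that are simple in a fixed graded submodule G with respect to B is finite. -/
/-- Each fiber of `degQ` is finite (Dickson's lemma plus pointedness of `L`). -/
lemma degQ_fiber_finite (n : ℕ) (L : AddSubgroup (Fin n → ℤ))
    (hL : ∀ w ∈ L, (∀ i, 0 ≤ w i) → w = 0) (c : (Fin n → ℤ) ⧸ L) :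
    {a : Fin n →₀ ℕ | degQ n L a = c}.Finite := by
  by_contra hinf
  have hinf' : {a : Fin n →₀ ℕ | degQ n L a = c}.Infinite := hinf
  let f := hinf'.natEmbedding
  have hpwo := Set.isPWO_of_wellQuasiOrderedLE {a : Fin n →₀ ℕ | degQ n L a = c}
  obtain ⟨m, m', hmm', hle⟩ := hpwo.exists_lt (f := fun i => (f i : Fin n →₀ ℕ)) (fun i => (f i).2)
  have hdm : degQ n L (f m : Fin n →₀ ℕ) = c := (f m).2
  have hdm' : degQ n L (f m' : Fin n →₀ ℕ) = c := (f m').2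
  have hmem : (fun i => ((f m' : Fin n →₀ ℕ) i : ℤ)) - (fun i => ((f m : Fin n →₀ ℕ) i : ℤ)) ∈ L := by
    have h1 : degQ n L (f m : Fin n →₀ ℕ) = degQ n L (f m' : Fin n →₀ ℕ) := by rw [hdm, hdm']
    unfold degQ at h1
    rw [QuotientAddGroup.eq] at h1
    rwa [neg_add_eq_sub] at h1
  have hzero := hL _ hmem (fun i => by
    have := hle i
    simp only [Pi.sub_apply, sub_nonneg]
    exact_mod_cast this)
  have heq : (f m : Fin n →₀ ℕ) = (f m' : Fin n →₀ ℕ) := by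
    ext i
    have := congrFun hzero i
    simp only [Pi.sub_apply, Pi.zero_apply, sub_eq_zero] at this
    exact_mod_cast this.symm
  have : m = m' := f.injective (Subtype.ext heq)
  omega

/-- for `b ∈ 𝒜`, the set of pairs (monomial, basis element) of total degree `b`
is finite, and consequently there are only finitely many scalar-equivalence classes of
simple homogeneous elements of degree `b` in a graded submodule `G`. -/
theorem finitely_many_simple_classes (k : Type) [Field k] (n : ℕ)
    (L : AddSubgroup (Fin n → ℤ)) (hL : ∀ w ∈ L, (∀ i, 0 ≤ w i) → w = 0)
    (ι : Type) [Fintype ι] (dB : ι → (Fin n → ℤ) ⧸ L)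
    (G : Submodule (MvPolynomial (Fin n) k) (ι →₀ MvPolynomial (Fin n) k))
    (b : (Fin n → ℤ) ⧸ L) :
    {p : (Fin n →₀ ℕ) × ι | degQ n L p.1 + dB p.2 = b}.Finite ∧
    ∃ T : Set (ι →₀ MvPolynomial (Fin n) k), T.Finite ∧
      ∀ h, h ∈ G → h ≠ 0 → IsHomogEl k n L ι dB h b → IsSimpleEl k n L ι dB G h →
        ∃ g ∈ T, ∃ c : k, c ≠ 0 ∧ h = c • g := by
  classical
  set C := {p : (Fin n →₀ ℕ) × ι | degQ n L p.1 + dB p.2 = b} with hCdef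
  have hC : C.Finite := by
    have hsub : C ⊆ (⋃ t : ι, {a : Fin n →₀ ℕ | degQ n L a = b - dB t}) ×ˢ (Set.univ : Set ι) := by
      rintro ⟨a, t⟩ hp
      refine ⟨Set.mem_iUnion.2 ⟨t, ?_⟩, Set.mem_univ _⟩
      simp only [Set.mem_setOf_eq] at hp ⊢
      rw [← hp]; abel
    exact Set.Finite.subset
      ((Set.finite_iUnion fun t => degQ_fiber_finite n L hL (b - dB t)).prod Set.finite_univ) hsub
  refine ⟨hC, ?_⟩
  -- define a choice of representative for each possible support
  set P : Set ((Fin n →₀ ℕ) × ι) → Prop := fun S =>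
    ∃ g : ι →₀ MvPolynomial (Fin n) k, g ∈ G ∧ g ≠ 0 ∧ IsHomogEl k n L ι dB g b ∧
      SSupp k n ι g = S with hPdef
  set pick : Set ((Fin n →₀ ℕ) × ι) → (ι →₀ MvPolynomial (Fin n) k) := fun S =>
    if hx : P S then hx.choose else 0 with hpickdef
  refine ⟨pick '' {S | S ⊆ C}, (hC.finite_subsets.image pick), ?_⟩
  intro h hG h0 hhom hsimple
  have hsupp_sub : SSupp k n ι h ⊆ C := by
    rintro ⟨a, t⟩ hp
    exact hhom a t hp
  have hP : P (SSupp k n ι h) := ⟨h, hG, h0, hhom, rfl⟩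
  obtain ⟨hgG, hg0, hghom, hgsupp⟩ := hP.choose_spec
  set g := hP.choose with hgdef
  have hpick : pick (SSupp k n ι h) = g := by
    show (if hx : P (SSupp k n ι h) then hx.choose else 0) = g; exact dif_pos hP
  refine ⟨g, ⟨SSupp k n ι h, hsupp_sub, hpick⟩, ?_⟩
  -- find a point in the common support
  have hex : ∃ p : (Fin n →₀ ℕ) × ι, p ∈ SSupp k n ι h := by
    obtain ⟨t, ht⟩ := Finsupp.ne_iff.mp h0
    obtain ⟨a, ha⟩ := MvPolynomial.ne_zero_iff.mp (by simpa using ht)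
    exact ⟨(a, t), ha⟩
  obtain ⟨⟨a₀, t₀⟩, hp₀⟩ := hex
  have hp₀g : MvPolynomial.coeff a₀ (g t₀) ≠ 0 := by
    have : (a₀, t₀) ∈ SSupp k n ι g := hgsupp ▸ hp₀
    exact this
  have hp₀h : MvPolynomial.coeff a₀ (h t₀) ≠ 0 := hp₀
  set c : k := MvPolynomial.coeff a₀ (h t₀) / MvPolynomial.coeff a₀ (g t₀) with hcdef
  have hc0 : c ≠ 0 := div_ne_zero hp₀h hp₀g
  refine ⟨c, hc0, ?_⟩
  -- show h = c • g by simplicity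
  set h' : ι →₀ MvPolynomial (Fin n) k := h - ((MvPolynomial.C c : MvPolynomial (Fin n) k)) • g with hh'def
  have hcoeff : ∀ (a : Fin n →₀ ℕ) (t : ι),
      MvPolynomial.coeff a (h' t) =
        MvPolynomial.coeff a (h t) - c * MvPolynomial.coeff a (g t) := by
    intro a t
    simp [hh'def, Finsupp.sub_apply, Finsupp.smul_apply, smul_eq_mul,
      MvPolynomial.coeff_sub, MvPolynomial.coeff_C_mul]
  have hsmul_eq : (c • g : ι →₀ MvPolynomial (Fin n) k) = ((MvPolynomial.C c : MvPolynomial (Fin n) k)) • g := by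
    ext t a
    simp [Finsupp.smul_apply, smul_eq_mul, MvPolynomial.coeff_C_mul,
      MvPolynomial.coeff_smul]
  by_cases hz : h' = 0
  · have : h = ((MvPolynomial.C c : MvPolynomial (Fin n) k)) • g := by
      have := sub_eq_zero.mp hz
      exact this
    rw [this, hsmul_eq]
  · exfalso
    apply hsimple
    refine ⟨h', Submodule.sub_mem G hG (Submodule.smul_mem G _ hgG), hz, ⟨b, ?_⟩, ?_, ?_⟩
    · intro a t hat
      rw [hcoeff] at hat
      by_cases hh : MvPolynomial.coeff a (h t) ≠ 0
      · exact hhom a t hh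
      · push_neg at hh
        have : MvPolynomial.coeff a (g t) ≠ 0 := by
          intro hg; rw [hh, hg] at hat; simp at hat
        exact hghom a t this
    · rintro ⟨a, t⟩ hat
      have hat' : MvPolynomial.coeff a (h t) - c * MvPolynomial.coeff a (g t) ≠ 0 := by
        rw [← hcoeff]; exact hat
      by_cases hh : MvPolynomial.coeff a (h t) ≠ 0
      · exact hh
      · push_neg at hh
        have hg : MvPolynomial.coeff a (g t) ≠ 0 := by
          intro hg; rw [hh, hg] at hat'; simp at hat'
        exact hgsupp ▸ hg
    · intro hsub
      have : (a₀, t₀) ∈ SSupp k n ι h' := hsub hp₀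
      have : MvPolynomial.coeff a₀ (h' t₀) ≠ 0 := this
      rw [hcoeff] at this
      apply this
      rw [hcdef, div_mul_cancel₀ _ hp₀g, sub_self]
end

section
/- Let I_L be a lattice ideal and b ∈ 𝒜. Let I_{L,b} be the ideal generated by all binomials of I_L of 𝒜-degree strictly smaller than b, and let G(b) be the graph on vertex set C_b with an edge {x^u, x^v} whenever x^u − x^v ∈ I_{L,b}. Then a subset of C_b is the vertex set of a connected component of G(b) if and only if it is the vertex set of a connected component of Δ_gcd(b). -/
/-- The partial order on `𝒜`: `b ≤ c` iff `c = b + e` for some `e ∈ 𝒜`. -/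
def degLE (n : ℕ) (L : AddSubgroup (Fin n → ℤ)) (b c : (Fin n → ℤ) ⧸ L) : Prop :=
  ∃ w : Fin n →₀ ℕ, b + degQ n L w = c

/-- The strict order on `𝒜`. -/
def degLT (n : ℕ) (L : AddSubgroup (Fin n → ℤ)) (b c : (Fin n → ℤ) ⧸ L) : Prop :=
  degLE n L b c ∧ b ≠ c

/-- The ideal `I_{L,b}` generated by all binomials of the lattice ideal `I_L` of
`𝒜`-degree strictly smaller than `b`. -/
noncomputable def latticeIdealBelow (k : Type) [Field k] (n : ℕ) (L : AddSubgroup (Fin n → ℤ))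
    (b : (Fin n → ℤ) ⧸ L) : Ideal (MvPolynomial (Fin n) k) :=
  Ideal.span {f | ∃ u v : Fin n →₀ ℕ, (fun i => (u i : ℤ) - (v i : ℤ)) ∈ L ∧
    degLT n L (degQ n L u) b ∧ f = MvPolynomial.monomial u 1 - MvPolynomial.monomial v 1}

/-- The 1-skeleton of the gcd-complex `Δ_gcd(b)` on the fiber `C_b`. -/
def gcdGraph (n : ℕ) (L : AddSubgroup (Fin n → ℤ)) (b : (Fin n → ℤ) ⧸ L) :
    SimpleGraph {u : Fin n →₀ ℕ // degQ n L u = b} :=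
  SimpleGraph.fromRel (fun u v => ∃ j : Fin n, u.1 j ≠ 0 ∧ v.1 j ≠ 0)

/-- The graph `G(b)` on the fiber `C_b`: `x^u` and `x^v` are adjacent when
`x^u - x^v ∈ I_{L,b}`. -/
def fiberGraph (k : Type) [Field k] (n : ℕ) (L : AddSubgroup (Fin n → ℤ))
    (b : (Fin n → ℤ) ⧸ L) : SimpleGraph {u : Fin n →₀ ℕ // degQ n L u = b} :=
  SimpleGraph.fromRel (fun u v =>
    (MvPolynomial.monomial u.1 1 - MvPolynomial.monomial v.1 1 : MvPolynomial (Fin n) k)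
      ∈ latticeIdealBelow k n L b)

open MvPolynomial

private lemma degQ_add (n : ℕ) (L : AddSubgroup (Fin n → ℤ)) (u v : Fin n →₀ ℕ) :
    degQ n L (u + v) = degQ n L u + degQ n L v := by
  show QuotientAddGroup.mk _ = QuotientAddGroup.mk _ + QuotientAddGroup.mk _
  have h : (fun i => (((u + v)) i : ℤ)) = (fun i => (u i : ℤ)) + (fun i => (v i : ℤ)) := by
    funext i; simp
  rw [h]; rfl

private lemma sub_mem_of_degQ_eq {n : ℕ} {L : AddSubgroup (Fin n → ℤ)} {u v : Fin n →₀ ℕ}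
    (h : degQ n L u = degQ n L v) :
    (fun i => (u i : ℤ) - (v i : ℤ)) ∈ L := by
  rw [degQ, degQ, QuotientAddGroup.eq] at h
  have h2 := neg_mem h
  have heq : (fun i => (u i : ℤ) - (v i : ℤ))
      = -((-fun i => (u i : ℤ)) + fun i => (v i : ℤ)) := by
    funext i; simp; ring
  rw [heq]; exact h2

private lemma degQ_eq_of_sub_mem {n : ℕ} {L : AddSubgroup (Fin n → ℤ)} {u v : Fin n →₀ ℕ}
    (h : (fun i => (u i : ℤ) - (v i : ℤ)) ∈ L) :
    degQ n L u = degQ n L v := by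
  rw [degQ, degQ, QuotientAddGroup.eq]
  have heq : ((-fun i => (u i : ℤ)) + fun i => (v i : ℤ))
      = -(fun i => (u i : ℤ) - (v i : ℤ)) := by
    funext i; simp; ring
  rw [heq]; exact neg_mem h

/-- Hard direction: membership of `x^u - x^v` in `I_{L,b}` forces `u`, `v` to be connected
in the gcd graph. -/
private lemma gcd_reach_of_mem (k : Type) [Field k] (n : ℕ) (L : AddSubgroup (Fin n → ℤ))
    (b : (Fin n → ℤ) ⧸ L) (u v : {u : Fin n →₀ ℕ // degQ n L u = b})
    (h : (monomial u.1 1 - monomial v.1 1 : MvPolynomial (Fin n) k)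
      ∈ latticeIdealBelow k n L b) :
    (gcdGraph n L b).Reachable u v := by
  classical
  set P : (Fin n →₀ ℕ) → Prop :=
    fun m => ∃ hm : degQ n L m = b, (gcdGraph n L b).Reachable ⟨m, hm⟩ u with hPdef
  set ψ : MvPolynomial (Fin n) k →ₗ[k] k :=
    Finsupp.lsum k (fun m => if P m then (LinearMap.id : k →ₗ[k] k) else 0) ∘ₗ
      (AddMonoidAlgebra.coeffLinearEquiv k).toLinearMap with hψdef
  have hψmon : ∀ (m : Fin n →₀ ℕ) (c : k), ψ (monomial m c) = if P m then c else 0 := by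
    intro m c
    have hm : AddMonoidAlgebra.coeffLinearEquiv k (monomial m c : MvPolynomial (Fin n) k)
        = Finsupp.single m c := rfl
    rw [hψdef, LinearMap.comp_apply, LinearEquiv.coe_coe, hm]
    erw [Finsupp.lsum_single]
    split <;> simp
  -- key combinatorial step
  have hP : ∀ (u' v' : Fin n →₀ ℕ), (fun i => (u' i : ℤ) - (v' i : ℤ)) ∈ L →
      degLT n L (degQ n L u') b → ∀ a, P (a + u') → P (a + v') := by
    rintro u' v' hmem hlt a ⟨hdeg, hreach⟩
    have hq : degQ n L u' = degQ n L v' := degQ_eq_of_sub_mem hmem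
    have hdeg' : degQ n L (a + v') = b := by
      rw [degQ_add, ← hq, ← degQ_add]; exact hdeg
    refine ⟨hdeg', ?_⟩
    by_cases he : a + u' = a + v'
    · have hv : (⟨a + v', hdeg'⟩ : {u : Fin n →₀ ℕ // degQ n L u = b}) = ⟨a + u', hdeg⟩ :=
        Subtype.ext he.symm
      rw [hv]; exact hreach
    · have ha : a ≠ 0 := by
        rintro rfl
        exact hlt.2 (by simpa using hdeg)
      obtain ⟨j, hj⟩ : ∃ j, a j ≠ 0 := by
        by_contra hc
        push_neg at hc
        exact ha (Finsupp.ext hc)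
      have hadj : (gcdGraph n L b).Adj ⟨a + v', hdeg'⟩ ⟨a + u', hdeg⟩ := by
        rw [gcdGraph, SimpleGraph.fromRel_adj]
        refine ⟨fun hc => he (congrArg Subtype.val hc).symm, Or.inl ⟨j, ?_, ?_⟩⟩
        · simp [Finsupp.add_apply, hj]
        · simp [Finsupp.add_apply, hj]
      exact hadj.reachable.trans hreach
  have hvanish : ∀ f ∈ latticeIdealBelow k n L b, ∀ p, ψ (p * f) = 0 := by
    intro f hf
    refine Submodule.span_induction ?_ ?_ ?_ ?_ hf
    · rintro g ⟨u', v', hmem, hlt, rfl⟩ p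
      induction p using MvPolynomial.induction_on' with
      | monomial a c =>
        have hmem' : (fun i => (v' i : ℤ) - (u' i : ℤ)) ∈ L := by
          have h2 := neg_mem hmem
          have heq : (fun i => (v' i : ℤ) - (u' i : ℤ))
              = -(fun i => (u' i : ℤ) - (v' i : ℤ)) := by funext i; simp
          rw [heq]; exact h2
        have hq : degQ n L u' = degQ n L v' := degQ_eq_of_sub_mem hmem
        have hlt' : degLT n L (degQ n L v') b := hq ▸ hlt
        have hiff : P (a + u') ↔ P (a + v') :=
          ⟨hP u' v' hmem hlt a, hP v' u' hmem' hlt' a⟩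
        rw [mul_sub, monomial_mul, monomial_mul, map_sub, hψmon, hψmon, mul_one]
        by_cases h1 : P (a + u')
        · rw [if_pos h1, if_pos (hiff.mp h1), sub_self]
        · rw [if_neg h1, if_neg (fun h2 => h1 (hiff.mpr h2)), sub_self]
      | add p q hp hq => rw [add_mul, map_add, hp, hq, add_zero]
    · intro p; simp
    · intro x y _ _ hx hy p
      rw [mul_add, map_add, hx, hy, add_zero]
    · intro r x _ hx p
      rw [smul_eq_mul, ← mul_assoc]
      exact hx (p * r)
  have h0 := hvanish _ h 1
  rw [one_mul, map_sub, hψmon, hψmon] at h0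
  have hPu : P u.1 := ⟨u.2, by rw [Subtype.coe_eta]⟩
  rw [if_pos hPu] at h0
  by_cases hPv : P v.1
  · obtain ⟨hm, hr⟩ := hPv
    have hv : (⟨v.1, hm⟩ : {u : Fin n →₀ ℕ // degQ n L u = b}) = v := Subtype.ext rfl
    exact (hv ▸ hr).symm
  · rw [if_neg hPv] at h0
    simp at h0

/-- Easy direction: a common variable gives membership in `I_{L,b}`. -/
private lemma mem_of_common (k : Type) [Field k] (n : ℕ) (L : AddSubgroup (Fin n → ℤ))
    (hL : ∀ w ∈ L, (∀ i, 0 ≤ w i) → w = 0)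
    (b : (Fin n → ℤ) ⧸ L) (u v : {u : Fin n →₀ ℕ // degQ n L u = b})
    (j : Fin n) (hu : u.1 j ≠ 0) (hv : v.1 j ≠ 0) :
    (monomial u.1 1 - monomial v.1 1 : MvPolynomial (Fin n) k)
      ∈ latticeIdealBelow k n L b := by
  set e : Fin n →₀ ℕ := Finsupp.single j 1 with he
  set u' : Fin n →₀ ℕ := u.1 - e with hu'
  set v' : Fin n →₀ ℕ := v.1 - e with hv'
  have hle_u : e ≤ u.1 := by
    rw [he, Finsupp.single_le_iff]; omega
  have hle_v : e ≤ v.1 := by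
    rw [he, Finsupp.single_le_iff]; omega
  have hcu : u' + e = u.1 := tsub_add_cancel_of_le hle_u
  have hcv : v' + e = v.1 := tsub_add_cancel_of_le hle_v
  have hcast_u : ∀ i, (u' i : ℤ) = (u.1 i : ℤ) - (e i : ℤ) := by
    intro i
    have : e i ≤ u.1 i := hle_u i
    rw [hu', Finsupp.tsub_apply]
    omega
  have hcast_v : ∀ i, (v' i : ℤ) = (v.1 i : ℤ) - (e i : ℤ) := by
    intro i
    have : e i ≤ v.1 i := hle_v i
    rw [hv', Finsupp.tsub_apply]
    omega
  have hmem : (fun i => (u' i : ℤ) - (v' i : ℤ)) ∈ L := by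
    have hsub : (fun i => (u.1 i : ℤ) - (v.1 i : ℤ)) ∈ L :=
      sub_mem_of_degQ_eq (u.2.trans v.2.symm)
    have heq : (fun i => (u' i : ℤ) - (v' i : ℤ)) = fun i => (u.1 i : ℤ) - (v.1 i : ℤ) := by
      funext i; rw [hcast_u, hcast_v]; ring
    rw [heq]; exact hsub
  have hdegu : degQ n L u' + degQ n L e = b := by
    rw [← degQ_add, hcu, u.2]
  have hlt : degLT n L (degQ n L u') b := by
    refine ⟨⟨e, hdegu⟩, ?_⟩
    intro hb
    have h0 : degQ n L e = 0 := by
      have := hdegu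
      rw [hb] at this
      exact (add_eq_left).mp this
    have hmem0 : (fun i => (e i : ℤ)) ∈ L := by
      rw [degQ] at h0
      exact (QuotientAddGroup.eq_zero_iff _).mp h0
    have := hL _ hmem0 (fun i => by positivity)
    have hj := congrFun this j
    rw [he] at hj
    simp at hj
  have hg : (monomial u' 1 - monomial v' 1 : MvPolynomial (Fin n) k)
      ∈ latticeIdealBelow k n L b :=
    Ideal.subset_span ⟨u', v', hmem, hlt, rfl⟩
  have hfact : (monomial u.1 1 - monomial v.1 1 : MvPolynomial (Fin n) k)
      = monomial e 1 * (monomial u' 1 - monomial v' 1) := by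
    rw [mul_sub, monomial_mul, monomial_mul, mul_one]
    rw [show e + u' = u.1 by rw [add_comm]; exact hcu,
        show e + v' = v.1 by rw [add_comm]; exact hcv]
  rw [hfact]
  exact Ideal.mul_mem_left _ _ hg

/-- a subset of the fiber `C_b` is the vertex set of a connected component
of `G(b)` iff it is the vertex set of a connected component of `Δ_gcd(b)`. -/
theorem fiberGraph_gcdGraph_same_components (k : Type) [Field k] (n : ℕ)
    (L : AddSubgroup (Fin n → ℤ)) (hL : ∀ w ∈ L, (∀ i, 0 ≤ w i) → w = 0)
    (b : (Fin n → ℤ) ⧸ L) (S : Set {u : Fin n →₀ ℕ // degQ n L u = b}) :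
    (∃ c : (fiberGraph k n L b).ConnectedComponent,
        S = {u | (fiberGraph k n L b).connectedComponentMk u = c}) ↔
    (∃ c : (gcdGraph n L b).ConnectedComponent,
        S = {u | (gcdGraph n L b).connectedComponentMk u = c}) := by
  have hle : gcdGraph n L b ≤ fiberGraph k n L b := by
    intro u v hadj
    rw [gcdGraph, SimpleGraph.fromRel_adj] at hadj
    obtain ⟨hne, hj⟩ := hadj
    rw [fiberGraph, SimpleGraph.fromRel_adj]
    refine ⟨hne, Or.inl ?_⟩
    rcases hj with ⟨j, h1, h2⟩ | ⟨j, h1, h2⟩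
    · exact mem_of_common k n L hL b u v j h1 h2
    · exact mem_of_common k n L hL b u v j h2 h1
  have hreach : ∀ u v, (fiberGraph k n L b).Reachable u v ↔ (gcdGraph n L b).Reachable u v := by
    intro u v
    constructor
    · intro h
      obtain ⟨w⟩ := h
      induction w with
      | nil => exact SimpleGraph.Reachable.refl _
      | cons hadj _ ih =>
        refine SimpleGraph.Reachable.trans ?_ ih
        rw [fiberGraph, SimpleGraph.fromRel_adj] at hadj
        obtain ⟨_, hm | hm⟩ := hadj
        · exact gcd_reach_of_mem k n L b _ _ hm
        · refine (gcd_reach_of_mem k n L b _ _ ?_).symm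
          exact hm
    · exact fun h => h.mono hle
  constructor
  · rintro ⟨c, rfl⟩
    obtain ⟨v, rfl⟩ := c.exists_rep
    refine ⟨(gcdGraph n L b).connectedComponentMk v, ?_⟩
    ext u
    exact ⟨fun h2 => SimpleGraph.ConnectedComponent.eq.mpr
        ((hreach u v).mp (SimpleGraph.ConnectedComponent.eq.mp h2)),
      fun h2 => SimpleGraph.ConnectedComponent.eq.mpr
        ((hreach u v).mpr (SimpleGraph.ConnectedComponent.eq.mp h2))⟩
  · rintro ⟨c, rfl⟩
    obtain ⟨v, rfl⟩ := c.exists_rep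
    refine ⟨(fiberGraph k n L b).connectedComponentMk v, ?_⟩
    ext u
    exact ⟨fun h2 => SimpleGraph.ConnectedComponent.eq.mpr
        ((hreach u v).mpr (SimpleGraph.ConnectedComponent.eq.mp h2)),
      fun h2 => SimpleGraph.ConnectedComponent.eq.mpr
        ((hreach u v).mp (SimpleGraph.ConnectedComponent.eq.mp h2))⟩
end

section
/- Let I_L = (f_1, …, f_s) be a lattice ideal generated by an R-regular sequence of binomials whose 𝒜-degrees are pairwise incomparable. Then each f_i is an indispensable binomial of I_L: every minimal 𝒜-homogeneous system of binomial generators of I_L contains a constant multiple of f_i. -/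
/-- The lattice ideal `I_L ⊆ k[x₁,…,xₙ]`. -/
noncomputable def latticeIdeal (k : Type) [Field k] (n : ℕ) (L : AddSubgroup (Fin n → ℤ)) :
    Ideal (MvPolynomial (Fin n) k) :=
  Ideal.span {f | ∃ u v : Fin n →₀ ℕ, (fun i => (u i : ℤ) - (v i : ℤ)) ∈ L ∧
    f = MvPolynomial.monomial u 1 - MvPolynomial.monomial v 1}

/-- `S` is a minimal system of binomial generators of `I_L`. -/
def IsMinimalBinomialGen (k : Type) [Field k] (n : ℕ) (L : AddSubgroup (Fin n → ℤ))
    (S : Set (MvPolynomial (Fin n) k)) : Prop :=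
  (∀ f ∈ S, ∃ (u v : Fin n →₀ ℕ) (c : k), c ≠ 0 ∧
      f = c • (MvPolynomial.monomial u 1 - MvPolynomial.monomial v 1)) ∧
    Ideal.span S = latticeIdeal k n L ∧
    ∀ f ∈ S, f ∉ Ideal.span (S \ {f})

/-- A binomial `f ∈ I_L` is indispensable if every minimal system of binomial generators
of `I_L` contains a constant multiple of `f`. -/
def IsIndispensable (k : Type) [Field k] (n : ℕ) (L : AddSubgroup (Fin n → ℤ))
    (f : MvPolynomial (Fin n) k) : Prop :=
  ∀ S : Set (MvPolynomial (Fin n) k), IsMinimalBinomialGen k n L S →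
    ∃ c : k, c ≠ 0 ∧ c • f ∈ S

/-! ### Auxiliary lemmas -/

open MvPolynomial

attribute [local instance] Classical.propDecidable

namespace LatticeAux

variable {k : Type} [Field k] {n : ℕ}

theorem degQ_add (n : ℕ) (L : AddSubgroup (Fin n → ℤ)) (a b : Fin n →₀ ℕ) :
    degQ n L (a + b) = degQ n L a + degQ n L b := by
  unfold degQ
  have h : (fun i => (((a + b) i : ℕ) : ℤ)) =
      (fun i => ((a i : ℕ) : ℤ)) + fun i => ((b i : ℕ) : ℤ) := by
    funext i; simp
  rw [h, QuotientAddGroup.mk_add]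

theorem degQ_eq_iff (n : ℕ) (L : AddSubgroup (Fin n → ℤ)) (a b : Fin n →₀ ℕ) :
    degQ n L a = degQ n L b ↔ (fun i => (a i : ℤ) - b i) ∈ L := by
  unfold degQ
  rw [QuotientAddGroup.eq]
  constructor
  · intro h; have h2 := L.neg_mem h; convert h2 using 1; funext i
    simp only [Pi.neg_apply, Pi.add_apply, Pi.sub_apply]; ring
  · intro h; have h2 := L.neg_mem h; convert h2 using 1; funext i
    simp only [Pi.neg_apply, Pi.add_apply, Pi.sub_apply]; ring

theorem degQ_zero (n : ℕ) (L : AddSubgroup (Fin n → ℤ)) : degQ n L 0 = 0 := by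
  unfold degQ
  have h : (fun i => (((0 : Fin n →₀ ℕ) i : ℕ) : ℤ)) = (0 : Fin n → ℤ) := by funext i; simp
  rw [h]; rfl

theorem degQ_eq_zero (n : ℕ) (L : AddSubgroup (Fin n → ℤ))
    (hL : ∀ w ∈ L, (∀ i, 0 ≤ w i) → w = 0) (w : Fin n →₀ ℕ) (h : degQ n L w = 0) : w = 0 := by
  unfold degQ at h
  rw [QuotientAddGroup.eq_zero_iff] at h
  have h2 := hL _ h (fun i => by positivity)
  ext i
  have := congrFun h2 i
  simpa using this

/-- The `𝒜`-homogeneous component of degree `d`. -/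
noncomputable def comp (L : AddSubgroup (Fin n → ℤ)) (d : (Fin n → ℤ) ⧸ L)
    (p : MvPolynomial (Fin n) k) : MvPolynomial (Fin n) k :=
  ∑ w ∈ p.support.filter (fun w => degQ n L w = d), monomial w (coeff w p)

theorem coeff_comp (L : AddSubgroup (Fin n → ℤ)) (d : (Fin n → ℤ) ⧸ L)
    (p : MvPolynomial (Fin n) k) (m : Fin n →₀ ℕ) :
    coeff m (comp L d p) = if degQ n L m = d then coeff m p else 0 := by
  unfold comp
  rw [coeff_sum]
  rw [Finset.sum_congr rfl (fun w _ => coeff_monomial m w (coeff w p))]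
  rw [Finset.sum_ite_eq' (p.support.filter (fun w => degQ n L w = d)) m (fun w => coeff w p)]
  by_cases h1 : degQ n L m = d
  · by_cases h2 : m ∈ p.support
    · simp [Finset.mem_filter, h1, h2]
    · rw [notMem_support_iff] at h2
      simp [Finset.mem_filter, h1, h2]
  · simp [Finset.mem_filter, h1]

theorem comp_add (L : AddSubgroup (Fin n → ℤ)) (d : (Fin n → ℤ) ⧸ L)
    (p q : MvPolynomial (Fin n) k) :
    comp L d (p + q) = comp L d p + comp L d q := by
  apply MvPolynomial.ext
  intro m
  rw [coeff_add, coeff_comp, coeff_comp, coeff_comp, coeff_add]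
  split_ifs <;> simp

noncomputable def compHom (L : AddSubgroup (Fin n → ℤ)) (d : (Fin n → ℤ) ⧸ L) :
    MvPolynomial (Fin n) k →+ MvPolynomial (Fin n) k :=
  AddMonoidHom.mk' (comp L d) (comp_add L d)

theorem comp_sub (L : AddSubgroup (Fin n → ℤ)) (d : (Fin n → ℤ) ⧸ L)
    (p q : MvPolynomial (Fin n) k) :
    comp L d (p - q) = comp L d p - comp L d q :=
  map_sub (compHom L d) p q

theorem comp_monomial (L : AddSubgroup (Fin n → ℤ)) (d : (Fin n → ℤ) ⧸ L)
    (w : Fin n →₀ ℕ) (c : k) :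
    comp L d (monomial w c) = if degQ n L w = d then monomial w c else 0 := by
  apply MvPolynomial.ext
  intro m
  rw [coeff_comp]
  by_cases h : degQ n L w = d
  · by_cases hm : degQ n L m = d
    · simp [h, hm]
    · simp only [h, if_true, hm, if_false]
      rw [coeff_monomial]
      split_ifs with h2
      · subst h2; exact absurd h hm
      · rfl
  · simp only [h, if_false]
    rw [coeff_monomial]
    by_cases h3 : degQ n L m = d
    · simp only [h3, if_true, coeff_zero]
      split_ifs with h2
      · subst h2; exact absurd h3 h
      · rfl
    · simp [h3]

/-- `g` is `𝒜`-homogeneous of degree `e`. -/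
def IsHom (L : AddSubgroup (Fin n → ℤ)) (e : (Fin n → ℤ) ⧸ L)
    (g : MvPolynomial (Fin n) k) : Prop :=
  ∀ w, coeff w g ≠ 0 → degQ n L w = e

theorem comp_of_isHom (L : AddSubgroup (Fin n → ℤ)) (d e : (Fin n → ℤ) ⧸ L)
    {g : MvPolynomial (Fin n) k} (hg : IsHom L e g) :
    comp L d g = if e = d then g else 0 := by
  apply MvPolynomial.ext
  intro m
  rw [coeff_comp]
  by_cases hm : coeff m g = 0
  · split_ifs <;> simp [hm]
  · have hme := hg m hm
    subst hme
    split_ifs <;> simp [hm]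

theorem isHom_monomial_mul (L : AddSubgroup (Fin n → ℤ)) (e : (Fin n → ℤ) ⧸ L)
    {g : MvPolynomial (Fin n) k} (hg : IsHom L e g) (w : Fin n →₀ ℕ) (c : k) :
    IsHom L (degQ n L w + e) (monomial w c * g) := by
  intro m hm
  rw [coeff_monomial_mul'] at hm
  split_ifs at hm with hle
  · have hc : coeff (m - w) g ≠ 0 := by
      intro h0; rw [h0, mul_zero] at hm; exact hm rfl
    have := hg _ hc
    rw [← this, ← degQ_add]
    congr 1
    rw [add_tsub_cancel_of_le hle]
  · exact absurd rfl hm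

theorem comp_sum {ι : Type*} (L : AddSubgroup (Fin n → ℤ)) (d : (Fin n → ℤ) ⧸ L)
    (s : Finset ι) (F : ι → MvPolynomial (Fin n) k) :
    comp L d (∑ i ∈ s, F i) = ∑ i ∈ s, comp L d (F i) :=
  map_sum (compHom L d) F s

theorem comp_mul_isHom (L : AddSubgroup (Fin n → ℤ)) (d e : (Fin n → ℤ) ⧸ L)
    (h g : MvPolynomial (Fin n) k) (hg : IsHom L e g) :
    comp L d (h * g) = comp L (d - e) h * g := by
  conv_lhs => rw [h.as_sum]
  rw [Finset.sum_mul, comp_sum]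
  have : comp L (d - e) h * g
      = ∑ w ∈ h.support, comp L (d-e) (monomial w (coeff w h)) * g := by
    rw [← Finset.sum_mul, ← comp_sum, ← h.as_sum]
  rw [this]
  apply Finset.sum_congr rfl
  intro w _
  rw [comp_of_isHom L d _ (isHom_monomial_mul L e hg w (coeff w h))]
  rw [comp_monomial]
  by_cases hc : degQ n L w = d - e
  · have h4 : degQ n L w + e = d := by rw [hc]; abel
    simp [hc, h4]
  · have h4 : ¬ (degQ n L w + e = d) := by
      intro h2; apply hc; rw [← h2]; abel
    simp [hc, h4]

theorem comp_ne_zero_exists (L : AddSubgroup (Fin n → ℤ)) (d : (Fin n → ℤ) ⧸ L)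
    (p : MvPolynomial (Fin n) k) (h : comp L d p ≠ 0) :
    ∃ w : Fin n →₀ ℕ, degQ n L w = d := by
  rw [Ne, MvPolynomial.eq_zero_iff, not_forall] at h
  obtain ⟨m, hm⟩ := h
  rw [coeff_comp] at hm
  refine ⟨m, ?_⟩
  by_contra hc
  rw [if_neg hc] at hm
  exact hm rfl

theorem isHom_binomial (L : AddSubgroup (Fin n → ℤ)) {a b : Fin n →₀ ℕ}
    (hab : degQ n L a = degQ n L b) :
    IsHom L (degQ n L a) ((monomial a 1 - monomial b 1 : MvPolynomial (Fin n) k)) := by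
  intro w hw
  rw [coeff_sub, coeff_monomial, coeff_monomial] at hw
  by_cases h1 : a = w
  · rw [← h1]
  · by_cases h2 : b = w
    · rw [← h2, ← hab]
    · rw [if_neg h1, if_neg h2, sub_zero] at hw
      exact absurd rfl hw

theorem isHom_smul (L : AddSubgroup (Fin n → ℤ)) (e : (Fin n → ℤ) ⧸ L)
    {g : MvPolynomial (Fin n) k} (hg : IsHom L e g) (c : k) : IsHom L e (c • g) := by
  intro w hw
  apply hg w
  intro h0
  rw [MvPolynomial.coeff_smul, h0, smul_zero] at hw
  exact hw rfl

theorem binomial_ne_zero (a b : Fin n →₀ ℕ) (hab : a ≠ b) :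
    (monomial a (1 : k) - monomial b 1) ≠ 0 := by
  intro h
  have h2 := congrArg (coeff a) h
  rw [coeff_sub, coeff_monomial, coeff_monomial, if_pos rfl,
    if_neg (fun hba => hab hba.symm), coeff_zero, sub_zero] at h2
  exact one_ne_zero h2

theorem eval_one_eq_zero (L : AddSubgroup (Fin n → ℤ)) {p : MvPolynomial (Fin n) k}
    (hp : p ∈ latticeIdeal k n L) : eval (fun _ => (1 : k)) p = 0 := by
  have hle : latticeIdeal k n L ≤ RingHom.ker (eval (fun _ => (1 : k))) := by
    apply Ideal.span_le.mpr
    rintro q ⟨u', v', -, rfl⟩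
    rw [SetLike.mem_coe, RingHom.mem_ker, map_sub, eval_monomial, eval_monomial]
    simp [Finsupp.prod]
  exact RingHom.mem_ker.mp (hle hp)

theorem monomial_not_mem (L : AddSubgroup (Fin n → ℤ)) (a : Fin n →₀ ℕ) :
    (monomial a (1 : k)) ∉ latticeIdeal k n L := by
  intro h
  have h2 := eval_one_eq_zero L h
  rw [eval_monomial] at h2
  simp [Finsupp.prod] at h2

theorem comp_mem_span (L : AddSubgroup (Fin n → ℤ)) (d : (Fin n → ℤ) ⧸ L)
    {S₀ : Set (MvPolynomial (Fin n) k)} (hS : ∀ g ∈ S₀, ∃ e, IsHom L e g)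
    {p : MvPolynomial (Fin n) k} (hp : p ∈ Ideal.span S₀) :
    comp L d p ∈ Ideal.span S₀ := by
  rw [← Ideal.submodule_span_eq] at hp
  obtain ⟨c, hsupp, hsum⟩ := Submodule.mem_span_set.mp hp
  rw [← hsum, Finsupp.sum, comp_sum]
  apply Ideal.sum_mem
  intro g hg
  obtain ⟨e, he⟩ := hS g (hsupp hg)
  rw [smul_eq_mul, comp_mul_isHom L d e _ _ he]
  exact Ideal.mul_mem_left _ _ (Ideal.subset_span (hsupp hg))

theorem binomial_deg_eq (L : AddSubgroup (Fin n → ℤ)) {a b : Fin n →₀ ℕ}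
    (hmem : (monomial a 1 - monomial b 1 : MvPolynomial (Fin n) k) ∈ latticeIdeal k n L) :
    degQ n L a = degQ n L b := by
  by_contra hab
  have h1 : comp L (degQ n L a) (monomial a (1:k) - monomial b 1) = monomial a 1 := by
    rw [comp_sub, comp_monomial, comp_monomial, if_pos rfl,
      if_neg (fun h => hab h.symm), sub_zero]
  have h2 : comp L (degQ n L a) (monomial a (1:k) - monomial b 1) ∈ latticeIdeal k n L := by
    apply comp_mem_span
    · rintro g ⟨u', v', hL', rfl⟩
      exact ⟨degQ n L u', isHom_binomial L ((degQ_eq_iff n L u' v').mpr hL')⟩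
    · exact hmem
  rw [h1] at h2
  exact monomial_not_mem L a h2

end LatticeAux

namespace LatticeAux

theorem key (k : Type) [Field k] (n : ℕ) (L : AddSubgroup (Fin n → ℤ))
    (hL : ∀ w ∈ L, (∀ i, 0 ≤ w i) → w = 0)
    (s : ℕ) (u v : Fin s → (Fin n →₀ ℕ)) (f : Fin s → MvPolynomial (Fin n) k)
    (hf : ∀ i, f i = monomial (u i) 1 - monomial (v i) 1)
    (hbin : ∀ i, (fun j => ((u i) j : ℤ) - ((v i) j : ℤ)) ∈ L)
    (hgen : Ideal.span (Set.range f) = latticeIdeal k n L)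
    (hinc : ∀ i i', i ≠ i' → ¬ degLE n L (degQ n L (u i)) (degQ n L (u i')))
    (i : Fin s) (a b : Fin n →₀ ℕ) (hab : a ≠ b)
    (hmem : (monomial a 1 - monomial b 1 : MvPolynomial (Fin n) k) ∈ latticeIdeal k n L)
    (hle : degLE n L (degQ n L a) (degQ n L (u i))) :
    ∃ c : k, c ≠ 0 ∧ (monomial a 1 - monomial b 1 : MvPolynomial (Fin n) k) = c • f i := by
  set p : MvPolynomial (Fin n) k := monomial a 1 - monomial b 1 with hpdef
  set da := degQ n L a with hda
  have hp : p ≠ 0 := binomial_ne_zero a b hab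
  have hdab : da = degQ n L b := binomial_deg_eq L hmem
  have hph : IsHom L da p := isHom_binomial L hdab
  have hfh : ∀ j, IsHom L (degQ n L (u j)) (f j) := by
    intro j
    rw [hf j]
    exact isHom_binomial L ((degQ_eq_iff n L (u j) (v j)).mpr (hbin j))
  have hmem' : p ∈ Ideal.span (Set.range f) := by rw [hgen]; exact hmem
  rw [← Ideal.submodule_span_eq] at hmem'
  obtain ⟨c, hcsum⟩ := Finsupp.mem_span_range_iff_exists_finsupp.mp hmem'
  have hsum2 : ∑ j : Fin s, c j * f j = p := by
    rw [← hcsum, Finsupp.sum_fintype]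
    · simp only [smul_eq_mul]
    · intro j; rw [zero_smul]
  have happ : p = ∑ j : Fin s, comp L (da - degQ n L (u j)) (c j) * f j := by
    calc p = comp L da p := by rw [comp_of_isHom L da da hph, if_pos rfl]
    _ = comp L da (∑ j : Fin s, c j * f j) := by rw [hsum2]
    _ = ∑ j : Fin s, comp L da (c j * f j) := comp_sum L da Finset.univ _
    _ = ∑ j : Fin s, comp L (da - degQ n L (u j)) (c j) * f j :=
        Finset.sum_congr rfl fun j _ => comp_mul_isHom L da _ _ _ (hfh j)
  have hzero : ∀ j, j ≠ i → comp L (da - degQ n L (u j)) (c j) * f j = 0 := by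
    intro j hj
    by_contra h0
    have hcj : comp L (da - degQ n L (u j)) (c j) ≠ 0 := fun h => h0 (by rw [h, zero_mul])
    obtain ⟨w, hw⟩ := comp_ne_zero_exists L _ _ hcj
    obtain ⟨w', hw'⟩ := hle
    apply hinc j i hj
    refine ⟨w + w', ?_⟩
    rw [degQ_add, hw, ← hw']
    abel
  have hp_eq : p = comp L (da - degQ n L (u i)) (c i) * f i := by
    rw [happ]
    exact Finset.sum_eq_single i (fun j _ hj => hzero j hj)
      (fun h => absurd (Finset.mem_univ i) h)
  set q := comp L (da - degQ n L (u i)) (c i) with hqdef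
  have hq : q ≠ 0 := fun h => hp (by rw [hp_eq, h, zero_mul])
  obtain ⟨w0, hw0⟩ := comp_ne_zero_exists L _ _ hq
  obtain ⟨w', hw'⟩ := hle
  have hw0w' : degQ n L (w0 + w') = 0 := by
    rw [degQ_add, hw0, ← hw']
    abel
  have hsum0 : w0 + w' = 0 := degQ_eq_zero n L hL _ hw0w'
  have hw00 : w0 = 0 := by
    ext t
    have h5 := DFunLike.congr_fun hsum0 t
    rw [Finsupp.add_apply, Finsupp.zero_apply] at h5
    rw [Finsupp.zero_apply]
    omega
  have hdai : da - degQ n L (u i) = 0 := by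
    rw [← hw0, hw00, degQ_zero]
  have hall0 : ∀ m, coeff m q ≠ 0 → m = 0 := by
    intro m hm
    rw [hqdef, coeff_comp] at hm
    split_ifs at hm with h6
    · exact degQ_eq_zero n L hL m (by rw [h6, hdai])
    · exact absurd rfl hm
  set c0 := coeff 0 q with hc0def
  have hq_eq : q = MvPolynomial.C c0 := by
    apply MvPolynomial.ext
    intro m
    rw [coeff_C]
    by_cases hm : m = 0
    · subst hm; rw [if_pos rfl]
    · rw [if_neg (fun h0 => hm h0.symm)]
      by_contra h7
      exact hm (hall0 m h7)
  have hc0 : c0 ≠ 0 := fun h => hq (by rw [hq_eq, h, map_zero])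
  exact ⟨c0, hc0, by rw [hp_eq, hq_eq, ← MvPolynomial.smul_eq_C_mul]⟩

end LatticeAux

open LatticeAux in
/-- if the lattice ideal `I_L` is generated by an `R`-regular sequence of
binomials `f_1, …, f_s` whose `𝒜`-degrees are pairwise incomparable, then each `f_i`
is an indispensable binomial of `I_L`. -/
theorem regular_sequence_indispensable (k : Type) [Field k] (n : ℕ)
    (L : AddSubgroup (Fin n → ℤ)) (hL : ∀ w ∈ L, (∀ i, 0 ≤ w i) → w = 0)
    (s : ℕ) (u v : Fin s → (Fin n →₀ ℕ))
    (f : Fin s → MvPolynomial (Fin n) k)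
    (hf : ∀ i, f i = MvPolynomial.monomial (u i) 1 - MvPolynomial.monomial (v i) 1)
    (hbin : ∀ i, (fun j => ((u i) j : ℤ) - ((v i) j : ℤ)) ∈ L)
    (hne : ∀ i, u i ≠ v i)
    (hreg : RingTheory.Sequence.IsRegular (MvPolynomial (Fin n) k) (List.ofFn f))
    (hgen : Ideal.span (Set.range f) = latticeIdeal k n L)
    (hinc : ∀ i i', i ≠ i' → ¬ degLE n L (degQ n L (u i)) (degQ n L (u i'))) :
    ∀ i, IsIndispensable k n L (f i) := by
  intro i S hS
  obtain ⟨hSbin, hSspan, hSmin⟩ := hS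
  have h0S : (0 : MvPolynomial (Fin n) k) ∉ S := by
    intro h0
    exact hSmin 0 h0 (Ideal.zero_mem _)
  have hfi_ne : f i ≠ 0 := by
    rw [hf i]; exact binomial_ne_zero _ _ (hne i)
  set bi := degQ n L (u i) with hbi
  have hfh : IsHom L bi (f i) := by
    rw [hf i]
    exact isHom_binomial L ((degQ_eq_iff n L (u i) (v i)).mpr (hbin i))
  have hfiS : f i ∈ Ideal.span S := by
    rw [hSspan, ← hgen]
    exact Ideal.subset_span (Set.mem_range_self i)
  rw [← Ideal.submodule_span_eq] at hfiS
  obtain ⟨c, hcsupp, hcsum⟩ := Submodule.mem_span_set.mp hfiS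
  rw [Finsupp.sum] at hcsum
  have h1 : ∑ g ∈ c.support, comp L bi (c g • g) = f i := by
    calc ∑ g ∈ c.support, comp L bi (c g • g)
        = comp L bi (∑ g ∈ c.support, c g • g) := (comp_sum L bi _ _).symm
    _ = comp L bi (f i) := by rw [hcsum]
    _ = f i := by rw [comp_of_isHom L bi bi hfh, if_pos rfl]
  have hne0 : ∃ g ∈ c.support, comp L bi (c g • g) ≠ 0 := by
    apply Finset.exists_ne_zero_of_sum_ne_zero
    rw [h1]; exact hfi_ne
  obtain ⟨g, hgc, hgne⟩ := hne0
  have hgS : g ∈ S := hcsupp hgc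
  obtain ⟨ag, bg, κ, hκ, hgeq⟩ := hSbin g hgS
  have habg : ag ≠ bg := by
    intro h
    have hg0 : g = 0 := by rw [hgeq, h, sub_self, smul_zero]
    exact h0S (hg0 ▸ hgS)
  have hgI : g ∈ latticeIdeal k n L := by
    rw [← hSspan]; exact Ideal.subset_span hgS
  have hbinommem : (MvPolynomial.monomial ag 1 - MvPolynomial.monomial bg 1 :
      MvPolynomial (Fin n) k) ∈ latticeIdeal k n L := by
    have h2 : (MvPolynomial.monomial ag 1 - MvPolynomial.monomial bg 1 :
        MvPolynomial (Fin n) k) = κ⁻¹ • g := by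
      rw [hgeq, smul_smul, inv_mul_cancel₀ hκ, one_smul]
    rw [h2, MvPolynomial.smul_eq_C_mul]
    exact Ideal.mul_mem_left _ _ hgI
  have hdg : degQ n L ag = degQ n L bg := binomial_deg_eq L hbinommem
  have hghom : IsHom L (degQ n L ag) g := by
    rw [hgeq]
    exact isHom_smul L _ (isHom_binomial L hdg) κ
  have hcompne : comp L (bi - degQ n L ag) (c g) ≠ 0 := by
    intro h
    apply hgne
    rw [smul_eq_mul, comp_mul_isHom L bi _ _ _ hghom, h, zero_mul]
  obtain ⟨w, hw⟩ := comp_ne_zero_exists L _ _ hcompne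
  have hle : degLE n L (degQ n L ag) bi := ⟨w, by rw [hw]; abel⟩
  obtain ⟨c', hc', heq⟩ :=
    key k n L hL s u v f hf hbin hgen hinc i ag bg habg hbinommem hle
  refine ⟨κ * c', mul_ne_zero hκ hc', ?_⟩
  rw [mul_smul, ← heq, ← hgeq]
  exact hgS
end
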